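/- Fix n ≥ 2. For y ∈ ℂⁿ with pairwise distinct coordinates and 1 ≤ k ≤ n−1, let s_k(y) be the n×n complex matrix equal to the identity except that its 2×2 submatrix in rows and columns {k, k+1} is [[0, 1/(y_k − y_{k+1})], [y_{k+1} − y_k, 0]]. On pairs (g, y) with g an n×n complex matrix and y ∈ ℂⁿ having pairwise distinct coordinates, define σ_k(g, y) := (g · s_k(y), τ_k·y), where τ_k·y swaps the k-th and (k+1)-st coordinates of y. Define composites recursively by Σ^{(1)} := id and Σ^{(m)} := σ_1 ∘ σ_2 ∘ ⋯ ∘ σ_{m−1} ∘ Σ^{(m−1)} for 2 ≤ m ≤ n. Then for every such pair (g, y), Σ^{(n)}(g, y) = (g', w_0·y), where w_0·y = (y_n, y_{n−1}, …, y_1) reverses the coordinates and g' is the matrix with entries g'_{i,j} = g_{i, n+1−j} · ∏_{ℓ>j}(y_{n+1−j} − y_{n+1−ℓ}) / ∏_{ℓ<j}(y_{n+1−j} − y_{n+1−ℓ}). -/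

import Mathlib

open Finset

/-- The matrix `s_k(y)` (entries indexed by `1,…,n`): the identity matrix except that its
2×2 submatrix in rows/columns `{k, k+1}` is `[[0, 1/(y_k−y_{k+1})],[y_{k+1}−y_k, 0]]`. -/
noncomputable def ggS (y : ℕ → ℂ) (k : ℕ) : ℕ → ℕ → ℂ := fun l j =>
  if l = k ∧ j = k + 1 then 1 / (y k - y (k+1))
  else if l = k + 1 ∧ j = k then y (k+1) - y k
  else if l = j ∧ l ≠ k ∧ l ≠ k + 1 then 1 else 0

/-- The Gelfand–Graev map `σ_k (g, y) = (g · s_k(y), τ_k · y)`, where matrices are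
`(ℕ→ℕ→ℂ)`-valued with rows/columns `1,…,n` and `τ_k` swaps coordinates `k` and `k+1`. -/
noncomputable def ggSigma (n k : ℕ) :
    ((ℕ → ℕ → ℂ) × (ℕ → ℂ)) → ((ℕ → ℕ → ℂ) × (ℕ → ℂ)) := fun p =>
  (fun i j => ∑ l ∈ Icc 1 n, p.1 i l * ggS p.2 k l j,
   fun i => p.2 (if i = k then k + 1 else if i = k + 1 then k else i))

/-- The composite `σ_1 ∘ σ_2 ∘ ⋯ ∘ σ_m`. -/
noncomputable def ggChain (n : ℕ) : ℕ → ((ℕ → ℕ → ℂ) × (ℕ → ℂ)) → ((ℕ → ℕ → ℂ) × (ℕ → ℂ))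
  | 0 => id
  | m + 1 => (ggChain n m) ∘ (ggSigma n (m + 1))

/-- The recursively defined composites `Σ^{(1)} = id`,
`Σ^{(m)} = σ_1 ∘ σ_2 ∘ ⋯ ∘ σ_{m−1} ∘ Σ^{(m−1)}`. -/
noncomputable def ggBig (n : ℕ) : ℕ → ((ℕ → ℕ → ℂ) × (ℕ → ℂ)) → ((ℕ → ℕ → ℂ) × (ℕ → ℂ))
  | 0 => id
  | m + 1 => (ggChain n m) ∘ (ggBig n m)

/-! ### Auxiliary machinery -/

theorem ggProdShift (f : ℕ → ℂ) (a b : ℕ) :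
    ∏ l ∈ Icc (a+1) (b+1), f l = ∏ l ∈ Icc a b, f (l+1) := by
  rw [← Finset.map_add_right_Icc a b 1, Finset.prod_map]
  rfl

theorem ggProdReflect (f : ℕ → ℂ) (a b c : ℕ) (h : b ≤ c) (h2 : a ≤ c) :
    ∏ l ∈ Icc a b, f (c - l) = ∏ l ∈ Icc (c - b) (c - a), f l := by
  apply Finset.prod_nbij' (fun l => c - l) (fun l => c - l) <;>
    (intro x hx; simp only [Finset.mem_Icc] at *) <;>
    first | rfl | (congr 1; omega) | omega

theorem ggProdBot (f : ℕ → ℂ) (a b : ℕ) (h : a ≤ b) :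
    ∏ l ∈ Icc a b, f l = f a * ∏ l ∈ Icc (a+1) b, f l := by
  rw [show Icc a b = insert a (Icc (a+1) b) by
        ext x; simp only [Finset.mem_Icc, Finset.mem_insert]; omega,
      Finset.prod_insert (by simp)]

/-- Column coefficient. -/
noncomputable def ggAA (y : ℕ → ℂ) (m j : ℕ) : ℂ :=
  (∏ l ∈ Icc (j+1) m, (y (m+1-j) - y (m+1-l))) / ∏ l ∈ Icc 1 (j-1), (y (m+1-j) - y (m+1-l))

/-- The state after `ggBig n m`. -/
noncomputable def ggSt (g : ℕ → ℕ → ℂ) (y : ℕ → ℂ) (m : ℕ) : (ℕ → ℕ → ℂ) × (ℕ → ℂ) :=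
  (fun i j => if j ≤ m then g i (m+1-j) * ggAA y m j else g i j,
   fun i => if i ≤ m then y (m+1-i) else y i)

/-- The intermediate state at stage `m`, after `σ_{k+1}, …, σ_m` applied to `ggSt g y m`. -/
noncomputable def ggSst (g : ℕ → ℕ → ℂ) (y : ℕ → ℂ) (m k : ℕ) : (ℕ → ℕ → ℂ) × (ℕ → ℂ) :=
  (fun i j =>
    if j ≤ k then g i (m+1-j) * ggAA y m j
    else if j = k+1 then g i (m+1) * ∏ l ∈ Icc 1 (m-k), (y (m+1) - y l)
    else if j ≤ m+1 then g i (m+2-j) * ggAA y m (j-1) / (y (m+2-j) - y (m+1))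
    else g i j,
   fun i =>
    if i ≤ k then y (m+1-i)
    else if i = k+1 then y (m+1)
    else if i ≤ m+1 then y (m+2-i)
    else y i)

/-- Agreement of states on the window `1,…,n`. -/
def ggAg (n : ℕ) (p q : (ℕ → ℕ → ℂ) × (ℕ → ℂ)) : Prop :=
  (∀ i, 1 ≤ i → i ≤ n → p.2 i = q.2 i) ∧ (∀ i j, 1 ≤ j → j ≤ n → p.1 i j = q.1 i j)

theorem ggAg_refl (n : ℕ) (p : (ℕ → ℕ → ℂ) × (ℕ → ℂ)) : ggAg n p p :=
  ⟨fun _ _ _ => rfl, fun _ _ _ _ => rfl⟩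

theorem ggAg_trans {n : ℕ} {p q r : (ℕ → ℕ → ℂ) × (ℕ → ℂ)}
    (h1 : ggAg n p q) (h2 : ggAg n q r) : ggAg n p r :=
  ⟨fun i a b => (h1.1 i a b).trans (h2.1 i a b),
   fun i j a b => (h1.2 i j a b).trans (h2.2 i j a b)⟩

theorem ggSigma_formula (n k : ℕ) (hk : 1 ≤ k) (hkn : k + 1 ≤ n)
    (p : (ℕ → ℕ → ℂ) × (ℕ → ℂ)) (i j : ℕ) (hj1 : 1 ≤ j) (hjn : j ≤ n) :
    (ggSigma n k p).1 i j =
      if j = k then p.1 i (k+1) * (p.2 (k+1) - p.2 k)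
      else if j = k+1 then p.1 i k * (1 / (p.2 k - p.2 (k+1)))
      else p.1 i j := by
  show (∑ l ∈ Icc 1 n, p.1 i l * ggS p.2 k l j) = _
  by_cases h1 : j = k
  · subst h1
    rw [if_pos rfl, Finset.sum_eq_single (j+1)]
    · congr 1
      simp only [ggS]
      split_ifs <;> first | rfl | omega | simp_all
    · intro l hl hne
      simp only [ggS]
      split_ifs <;> first | (exact mul_zero _) | omega | simp_all | tauto
    · intro h
      exact absurd (Finset.mem_Icc.mpr ⟨by omega, by omega⟩) h
  · by_cases h2 : j = k + 1
    · subst h2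
      rw [if_neg h1, if_pos rfl, Finset.sum_eq_single k]
      · congr 1
        simp only [ggS]
        split_ifs <;> first | rfl | omega | simp_all
      · intro l hl hne
        simp only [ggS]
        split_ifs <;> first | (exact mul_zero _) | omega | simp_all | tauto
      · intro h
        exact absurd (Finset.mem_Icc.mpr ⟨by omega, by omega⟩) h
    · rw [if_neg h1, if_neg h2, Finset.sum_eq_single j]
      · simp only [ggS]
        split_ifs <;> first | (exact mul_one _) | omega | simp_all | tauto
      · intro l hl hne
        simp only [ggS]
        split_ifs <;> first | (exact mul_zero _) | omega | simp_all | tauto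
      · intro h
        exact absurd (Finset.mem_Icc.mpr ⟨by omega, by omega⟩) h

theorem ggSigma_ag (n k : ℕ) (hk : 1 ≤ k) (hkn : k + 1 ≤ n)
    {p q : (ℕ → ℕ → ℂ) × (ℕ → ℂ)} (h : ggAg n p q) :
    ggAg n (ggSigma n k p) (ggSigma n k q) := by
  obtain ⟨h2, h1⟩ := h
  constructor
  · intro i hi1 hin
    show p.2 (if i = k then k+1 else if i = k+1 then k else i) = q.2 _
    split_ifs <;> apply h2 <;> omega
  · intro i j hj1 hjn
    show (∑ l ∈ Icc 1 n, p.1 i l * ggS p.2 k l j) = ∑ l ∈ Icc 1 n, q.1 i l * ggS q.2 k l j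
    refine Finset.sum_congr rfl fun l hl => ?_
    rw [Finset.mem_Icc] at hl
    rw [h1 i l hl.1 hl.2]
    congr 1
    simp only [ggS]
    rw [h2 k hk (by omega), h2 (k+1) (by omega) hkn]

theorem ggChain_ag (n : ℕ) :
    ∀ (k : ℕ), k + 1 ≤ n → ∀ (p q : (ℕ → ℕ → ℂ) × (ℕ → ℂ)), ggAg n p q →
      ggAg n (ggChain n k p) (ggChain n k q)
  | 0, _, _, _, h => h
  | (m+1), hk, p, q, h => by
    show ggAg n (ggChain n m (ggSigma n (m+1) p)) (ggChain n m (ggSigma n (m+1) q))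
    exact ggChain_ag n m (by omega) _ _ (ggSigma_ag n (m+1) (by omega) hk h)

theorem ggSubstep (g : ℕ → ℕ → ℂ) (y : ℕ → ℂ) (n m k : ℕ)
    (hk1 : 1 ≤ k) (hkm : k ≤ m) (hmn : m + 1 ≤ n) :
    ggAg n (ggSigma n k (ggSst g y m k)) (ggSst g y m (k-1)) := by
  constructor
  · intro i hi1 hin
    show (ggSst g y m k).2 (if i = k then k+1 else if i = k+1 then k else i)
        = (ggSst g y m (k-1)).2 i
    simp only [ggSst]
    split_ifs <;> first | rfl | (congr 1 <;> omega) | omega | simp_all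
  · intro i j hj1 hjn
    rw [ggSigma_formula n k hk1 (by omega) _ i j hj1 hjn]
    by_cases h1 : j = k
    · subst h1
      rw [if_pos rfl]
      simp only [ggSst]
      rw [if_neg (show ¬(j+1 ≤ j) by omega), if_pos (by trivial : (True : Prop)),
          if_neg (show ¬(j+1 ≤ j) by omega), if_pos (by trivial : (True : Prop)),
          if_pos (le_refl j),
          if_neg (show ¬(j ≤ j-1) by omega), if_pos (show j = (j-1)+1 by omega)]
      rw [show m - (j-1) = (m-j)+1 by omega,
          Finset.prod_Icc_succ_top (by omega : 1 ≤ (m-j)+1),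
          show m - j + 1 = m + 1 - j by omega]
      ring
    · by_cases h2 : j = k + 1
      · subst h2
        rw [if_neg h1, if_pos rfl]
        simp only [ggSst]
        rw [if_pos (le_refl k), if_pos (le_refl k),
            if_neg (show ¬(k+1 ≤ k) by omega), if_pos (by trivial : (True : Prop)),
            if_neg (show ¬(k+1 ≤ k-1) by omega), if_neg (show ¬(k+1 = (k-1)+1) by omega),
            if_pos (show k+1 ≤ m+1 by omega)]
        rw [show m+2-(k+1) = m+1-k by omega, show k+1-1 = k by omega, mul_one_div]
      · rw [if_neg h1, if_neg h2]
        simp only [ggSst]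
        by_cases h3 : j ≤ k-1
        · rw [if_pos (show j ≤ k by omega), if_pos h3]
        · rw [if_neg (show ¬(j ≤ k) by omega), if_neg h2,
              if_neg h3, if_neg (show ¬(j = (k-1)+1) by omega)]

theorem ggMainsub (g : ℕ → ℕ → ℂ) (y : ℕ → ℂ) (n m : ℕ) (hmn : m + 1 ≤ n) :
    ∀ k, k ≤ m → ggAg n (ggChain n k (ggSst g y m k)) (ggSst g y m 0)
  | 0, _ => ggAg_refl n _
  | (k+1), hk => by
    show ggAg n (ggChain n k (ggSigma n (k+1) (ggSst g y m (k+1)))) _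
    have h1 := ggSubstep g y n m (k+1) (by omega) hk hmn
    rw [show k+1-1 = k by omega] at h1
    exact ggAg_trans (ggChain_ag n k (by omega) _ _ h1) (ggMainsub g y n m hmn k (by omega))

theorem ggAA_one (y : ℕ → ℂ) (m : ℕ) :
    ggAA y (m+1) 1 = ∏ l ∈ Icc 1 m, (y (m+1) - y l) := by
  simp only [ggAA]
  rw [show (1:ℕ)-1 = 0 by rfl, show Icc 1 0 = (∅ : Finset ℕ) by rfl, Finset.prod_empty, div_one,
      show (m+1)+1-1 = m+1 by omega]
  have h := ggProdReflect (fun l => y (m+1) - y l) 2 (m+1) (m+2) (by omega) (by omega)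
  rw [show (1:ℕ)+1 = 2 by rfl]
  rw [show (∏ l ∈ Icc 2 (m+1), (y (m+1) - y (m+1+1-l))) =
        ∏ l ∈ Icc 2 (m+1), (y (m+1) - y (m+2-l)) by
      refine Finset.prod_congr rfl fun l hl => ?_
      rw [show m+1+1-l = m+2-l by omega]]
  rw [h, show m+2-(m+1) = 1 by omega, show m+2-2 = m by omega]

theorem ggAA_step (y : ℕ → ℂ) (m j : ℕ) (hj2 : 2 ≤ j) (hjm : j ≤ m + 1) :
    ggAA y m (j-1) / (y (m+2-j) - y (m+1)) = ggAA y (m+1) j := by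
  simp only [ggAA]
  rw [show (j-1)+1 = j by omega, show m+1-(j-1) = m+2-j by omega,
      show (m+1)+1-j = m+2-j by omega]
  have hnum : (∏ l ∈ Icc (j+1) (m+1), (y (m+2-j) - y (m+1+1-l)))
      = ∏ l ∈ Icc j m, (y (m+2-j) - y (m+1-l)) := by
    rw [ggProdShift (fun l => y (m+2-j) - y (m+1+1-l)) j m]
    refine Finset.prod_congr rfl fun l hl => ?_
    rw [show m+1+1-(l+1) = m+1-l by omega]
  have hden : (∏ l ∈ Icc 1 (j-1), (y (m+2-j) - y (m+1+1-l)))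
      = (y (m+2-j) - y (m+1)) * ∏ l ∈ Icc 1 (j-2), (y (m+2-j) - y (m+1-l)) := by
    rw [ggProdBot (fun l => y (m+2-j) - y (m+1+1-l)) 1 (j-1) (by omega)]
    rw [show m+1+1-1 = m+1 by omega]
    congr 1
    rw [show j-1 = (j-2)+1 by omega, ggProdShift (fun l => y (m+2-j) - y (m+1+1-l)) 1 (j-2)]
    refine Finset.prod_congr rfl fun l hl => ?_
    rw [show m+1+1-(l+1) = m+1-l by omega]
  rw [show (∏ l ∈ Icc (j+1) (m+1), (y (m+2-j) - y (m+1+1-l))) = _ from hnum,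
      show (∏ l ∈ Icc 1 (j-1), (y (m+2-j) - y (m+1+1-l))) = _ from hden,
      show (j-1)-1 = j-2 by omega, div_div]
  ring_nf

theorem ggSt_to_Sst (g : ℕ → ℕ → ℂ) (y : ℕ → ℂ) (n m : ℕ) :
    ggAg n (ggSt g y m) (ggSst g y m m) := by
  constructor
  · intro i hi1 hin
    simp only [ggSt, ggSst]
    split_ifs <;> first | rfl | (congr 1 <;> omega) | omega | simp_all
  · intro i j hj1 hjn
    simp only [ggSt, ggSst]
    by_cases h1 : j ≤ m
    · rw [if_pos h1, if_pos h1]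
    · by_cases h2 : j = m+1
      · rw [if_neg h1, if_neg h1, if_pos h2, Nat.sub_self,
            show Icc 1 0 = (∅ : Finset ℕ) by rfl, Finset.prod_empty, mul_one, h2]
      · rw [if_neg h1, if_neg h1, if_neg h2, if_neg (by omega)]

theorem ggSst_to_St (g : ℕ → ℕ → ℂ) (y : ℕ → ℂ) (n m : ℕ) :
    ggAg n (ggSst g y m 0) (ggSt g y (m+1)) := by
  constructor
  · intro i hi1 hin
    simp only [ggSt, ggSst]
    split_ifs <;> first | rfl | (congr 1 <;> omega) | omega | simp_all
  · intro i j hj1 hjn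
    simp only [ggSt, ggSst]
    rw [if_neg (by omega : ¬ j ≤ 0)]
    by_cases h2 : j = 1
    · rw [if_pos (by omega : j = 0 + 1), if_pos (by omega : j ≤ m + 1)]
      subst h2
      rw [ggAA_one y m, show m - 0 = m by rfl, show m+1+1-1 = m+1 by omega]
    · by_cases h3 : j ≤ m+1
      · rw [if_neg (by omega : ¬ j = 0 + 1), if_pos h3, if_pos h3]
        rw [show m+1+1-j = m+2-j by omega, ← ggAA_step y m j (by omega) h3, mul_div_assoc]
      · rw [if_neg (by omega : ¬ j = 0 + 1), if_neg h3, if_neg h3]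

theorem ggMain (g : ℕ → ℕ → ℂ) (y : ℕ → ℂ) (n : ℕ) :
    ∀ m, m ≤ n → ggAg n (ggBig n m (g, y)) (ggSt g y m)
  | 0, _ => by
    constructor
    · intro i hi1 hin
      show y i = _
      simp only [ggSt]
      rw [if_neg (by omega)]
    · intro i j hj1 hjn
      show g i j = _
      simp only [ggSt]
      rw [if_neg (by omega)]
  | (m+1), h => by
    show ggAg n (ggChain n m (ggBig n m (g, y))) (ggSt g y (m+1))
    have ih := ggMain g y n m (by omega)
    have h1 := ggChain_ag n m (by omega) _ _ ih
    have h2 := ggChain_ag n m (by omega) _ _ (ggSt_to_Sst g y n m)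
    have h3 := ggMainsub g y n m h m (le_refl m)
    exact ggAg_trans h1 (ggAg_trans h2 (ggAg_trans h3 (ggSst_to_St g y n m)))


/-- For every `n×n` complex matrix `g` and every `y ∈ ℂⁿ` with pairwise
distinct coordinates, `Σ^{(n)}(g, y) = (g', w_0·y)` where `(w_0·y)_i = y_{n+1−i}` and
`g'_{i,j} = g_{i,n+1−j} · ∏_{ℓ>j}(y_{n+1−j} − y_{n+1−ℓ}) / ∏_{ℓ<j}(y_{n+1−j} − y_{n+1−ℓ})`. -/
theorem stmt2 (n : ℕ) (hn : 2 ≤ n) (g : ℕ → ℕ → ℂ) (y : ℕ → ℂ)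
    (hy : ∀ k ∈ Icc 1 n, ∀ l ∈ Icc 1 n, k ≠ l → y k ≠ y l) :
    (∀ i ∈ Icc 1 n, (ggBig n n (g, y)).2 i = y (n + 1 - i)) ∧
    (∀ i ∈ Icc 1 n, ∀ j ∈ Icc 1 n,
      (ggBig n n (g, y)).1 i j =
        g i (n + 1 - j) * (∏ l ∈ Icc (j+1) n, (y (n+1-j) - y (n+1-l))) /
          ∏ l ∈ Icc 1 (j-1), (y (n+1-j) - y (n+1-l))) := by
  obtain ⟨H2, H1⟩ := ggMain g y n n (le_refl n)
  constructor
  · intro i hi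
    rw [Finset.mem_Icc] at hi
    rw [H2 i hi.1 hi.2]
    simp only [ggSt]
    rw [if_pos hi.2]
  · intro i hi j hj
    rw [Finset.mem_Icc] at hj
    rw [H1 i j hj.1 hj.2]
    simp only [ggSt, ggAA]
    rw [if_pos hj.2, mul_div_assoc]
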